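/- Let λ₂ = 27(26+15√3)/2. For every λ > λ₂, the polynomial f_λ(l) = l⁴ − l³ + λ(1−l/3)³ has at least two distinct positive real roots. -/
import Mathlib


open Real

/-- For `λ₂ = 27(26+15√3)/2` and every `λ > λ₂`, the polynomial
`f_λ l = l⁴ − l³ + λ(1−l/3)³` has at least two distinct positive real roots. -/
theorem stmt11 :
    ∀ lam : ℝ, lam > 27 * (26 + 15 * Real.sqrt 3) / 2 →
      ∃ l₁ l₂ : ℝ, 0 < l₁ ∧ 0 < l₂ ∧ l₁ ≠ l₂ ∧
        l₁ ^ 4 - l₁ ^ 3 + lam * (1 - l₁ / 3) ^ 3 = 0 ∧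
        l₂ ^ 4 - l₂ ^ 3 + lam * (1 - l₂ / 3) ^ 3 = 0 := by
  intro lam hlam
  set s := Real.sqrt 3 with hs_def
  have hs2 : s ^ 2 = 3 := Real.sq_sqrt (by norm_num)
  have hs_pos : (1:ℝ) ≤ s := by nlinarith [Real.sqrt_nonneg 3]
  set f : ℝ → ℝ := fun l => l ^ 4 - l ^ 3 + lam * (1 - l / 3) ^ 3 with hf
  have hcont : Continuous f := by fun_prop
  set L : ℝ := 6 + 3 * s with hL
  -- f 3 = 54 > 0
  have h3 : f 3 = 54 := by simp [hf]; norm_num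
  -- f L = (λ₂ - lam) * (10 + 6 s) < 0
  have hfL : f L = (27 * (26 + 15 * s) / 2 - lam) * (10 + 6 * s) := by
    simp only [hf, hL]
    linear_combination (810 + 621*s + 81*s^2 - 3*lam - lam*s) * hs2
  have hfLneg : f L < 0 := by
    rw [hfL]
    have h1 : 27 * (26 + 15 * s) / 2 - lam < 0 := by linarith
    nlinarith
  have hlam_big : (351:ℝ) < lam := by nlinarith
  have h3L : (3:ℝ) < L := by nlinarith
  have hLlam : L < lam := by nlinarith
  -- f lam > 0
  have hflam : 0 < f lam := by
    simp only [hf]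
    nlinarith [pow_pos (by linarith : (0:ℝ) < lam) 3, pow_pos (by linarith : (0:ℝ) < lam) 2]
  -- first root in [3, L]
  have hiv1 : (0:ℝ) ∈ Set.Icc (f L) (f 3) := ⟨le_of_lt hfLneg, by rw [h3]; norm_num⟩
  obtain ⟨l₁, hl₁mem, hl₁⟩ := intermediate_value_Icc' (le_of_lt h3L) hcont.continuousOn hiv1
  -- second root in [L, lam]
  have hiv2 : (0:ℝ) ∈ Set.Icc (f L) (f lam) := ⟨le_of_lt hfLneg, le_of_lt hflam⟩
  obtain ⟨l₂, hl₂mem, hl₂⟩ := intermediate_value_Icc (le_of_lt hLlam) hcont.continuousOn hiv2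
  refine ⟨l₁, l₂, by linarith [hl₁mem.1], by linarith [hl₁mem.1, hl₂mem.1, h3L], ?_, hl₁, hl₂⟩
  intro h
  have h1 : l₁ ≠ L := fun he => by rw [← he, hl₁] at hfLneg; exact lt_irrefl 0 hfLneg
  have h2 : l₂ ≠ L := fun he => by rw [← he, hl₂] at hfLneg; exact lt_irrefl 0 hfLneg
  have : l₁ < L := lt_of_le_of_ne hl₁mem.2 h1
  have : L < l₂ := lt_of_le_of_ne hl₂mem.1 (Ne.symm h2)
  linarith [h ▸ ‹l₁ < L›]
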